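/- arXiv:1408.5270 — 5 statements merged into one kernel-verified Lean document; each statement's English description precedes it below -/
import Mathlib

section
/- Let (Ω, F, P) be a probability space with a finite filtration F₀ ⊆ F₁ ⊆ ... ⊆ F_T ⊆ F. Let N denote the space of adapted processes x = (x_t)_{t=0}^T with x_t measurable with respect to F_t and values in ℝ^{n_t}, and let N^∞ be its bounded elements. Let N^⊥ = {v ∈ L¹ : E[x·v] = 0 for all x ∈ N^∞}. If x ∈ N, v ∈ N^⊥, and (x·v)⁺ ∈ L¹ (where x·v = Σ_t x_t·v_t), then x·v ∈ L¹ and E[x·v] = 0. -/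
open MeasureTheory
open scoped ENNReal

namespace PairingAux

variable {Ω : Type*}

/-- the `s`-th term of the pairing `x·v`, as a function of a natural number time. -/
noncomputable def pairTerm (T : ℕ) (n : Fin (T + 1) → ℕ)
    (x v : ∀ t : Fin (T + 1), Ω → Fin (n t) → ℝ) (s : ℕ) (ω : Ω) : ℝ :=
  if h : s < T + 1 then ∑ i : Fin (n ⟨s, h⟩), x ⟨s, h⟩ ω i * v ⟨s, h⟩ ω i else 0

/-- the tail sum `Σ_{s ≥ t} x_s·v_s`. -/
noncomputable def tailSum (T : ℕ) (n : Fin (T + 1) → ℕ)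
    (x v : ∀ t : Fin (T + 1), Ω → Fin (n t) → ℝ) (t : ℕ) (ω : Ω) : ℝ :=
  ∑ s ∈ Finset.Ico t (T + 1), pairTerm T n x v s ω

theorem tailSum_succ (T : ℕ) (n : Fin (T + 1) → ℕ)
    (x v : ∀ t : Fin (T + 1), Ω → Fin (n t) → ℝ) (t : ℕ) (ht : t < T + 1) (ω : Ω) :
    tailSum T n x v t ω = pairTerm T n x v t ω + tailSum T n x v (t + 1) ω := by
  unfold tailSum
  exact Finset.sum_eq_sum_Ico_succ_bot ht _

theorem tailSum_top (T : ℕ) (n : Fin (T + 1) → ℕ)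
    (x v : ∀ t : Fin (T + 1), Ω → Fin (n t) → ℝ) (ω : Ω) :
    tailSum T n x v (T + 1) ω = 0 := by
  simp [tailSum]

theorem measurable_indicator_pi {m : MeasurableSpace Ω} {N : ℕ} {f : Ω → Fin N → ℝ}
    (hf : Measurable f) {B : Set Ω} (hB : MeasurableSet B) :
    Measurable (fun ω i => B.indicator (fun ω' => f ω' i) ω) :=
  measurable_pi_lambda _ fun i => ((measurable_pi_apply i).comp hf).indicator hB

theorem measurable_zero_pi {m : MeasurableSpace Ω} {N : ℕ} :
    Measurable (fun (_ : Ω) (_ : Fin N) => (0 : ℝ)) :=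
  measurable_const

theorem measurableSet_abs_le {m : MeasurableSpace Ω} {N : ℕ} {f : Ω → Fin N → ℝ}
    (hf : Measurable f) (c : ℝ) : MeasurableSet {ω | ∀ i, |f ω i| ≤ c} := by
  have : {ω | ∀ i, |f ω i| ≤ c} = ⋂ i, (fun ω => |f ω i|) ⁻¹' Set.Iic c := by
    ext ω; simp [Set.mem_iInter]
  rw [this]
  exact MeasurableSet.iInter fun i =>
    ((measurable_pi_apply i).comp hf).abs measurableSet_Iic

theorem negPart_eq (a : ℝ) : max (-a) 0 = max a 0 - a := by
  rcases le_total 0 a with h | h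
  · rw [max_eq_right (neg_nonpos.2 h), max_eq_left h]; ring
  · rw [max_eq_left (neg_nonneg.2 h), max_eq_right h]; ring

theorem aux {Ω : Type*} [MeasurableSpace Ω] (μ : Measure Ω) [IsProbabilityMeasure μ]
    (T : ℕ) (n : Fin (T + 1) → ℕ)
    (𝔽 : Fin (T + 1) → MeasurableSpace Ω)
    (h𝔽le : ∀ t, 𝔽 t ≤ ‹MeasurableSpace Ω›)
    (h𝔽mono : ∀ s t : Fin (T + 1), s ≤ t → 𝔽 s ≤ 𝔽 t)
    (x : ∀ t : Fin (T + 1), Ω → Fin (n t) → ℝ)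
    (hx : ∀ t, Measurable[𝔽 t] (x t))
    (v : ∀ t : Fin (T + 1), Ω → Fin (n t) → ℝ)
    (hvmeas : ∀ t, Measurable (v t))
    (hvint : ∀ t, Integrable (fun ω => v t ω) μ)
    (hperp : ∀ y : ∀ t : Fin (T + 1), Ω → Fin (n t) → ℝ,
      (∀ t, Measurable[𝔽 t] (y t)) → (∀ t, ∃ C : ℝ, ∀ ω, ∀ i, |y t ω i| ≤ C) →
      ∫ ω, ∑ t : Fin (T + 1), ∑ i : Fin (n t), y t ω i * v t ω i ∂μ = 0) :
    ∀ d t, t + d = T + 1 →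
      ∀ A : Set Ω, (∀ s : Fin (T + 1), t ≤ (s : ℕ) → MeasurableSet[𝔽 s] A) →
      Integrable (A.indicator fun ω => max (tailSum T n x v t ω) 0) μ →
      Integrable (A.indicator (tailSum T n x v t)) μ ∧
        ∫ ω, A.indicator (tailSum T n x v t) ω ∂μ = 0 := by
  -- ambient measurability of everything in sight
  have hxm : ∀ t : Fin (T + 1), Measurable (x t) := fun t => (hx t).mono (h𝔽le t) le_rfl
  have hPmeas : ∀ s : ℕ, Measurable (pairTerm T n x v s) := by
    intro s
    unfold pairTerm
    by_cases hs : s < T + 1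
    · simp only [dif_pos hs]
      exact Finset.measurable_sum _ fun i _ =>
        ((measurable_pi_apply i).comp (hxm _)).mul ((measurable_pi_apply i).comp (hvmeas _))
    · simp only [dif_neg hs]; exact measurable_const
  have hSmeas : ∀ u : ℕ, Measurable (tailSum T n x v u) := fun u =>
    Finset.measurable_sum _ fun s _ => hPmeas s
  intro d
  induction d with
  | zero =>
    intro t ht A _ _
    have htt : t = T + 1 := by omega
    subst htt
    have hz : A.indicator (tailSum T n x v (T + 1)) = fun _ => 0 := by
      funext ω
      simp [tailSum_top, Set.indicator_apply]
    rw [hz]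
    exact ⟨integrable_const 0, by simp⟩
  | succ d ih =>
    intro t ht A hA hApos
    classical
    have htT : t ≤ T := by omega
    set tF : Fin (T + 1) := ⟨t, by omega⟩ with htF
    set S := tailSum T n x v with hS
    set P := pairTerm T n x v with hP
    have hSsucc : ∀ ω, S t ω = P t ω + S (t + 1) ω := fun ω =>
      tailSum_succ T n x v t (by omega) ω
    -- the truncation sets
    set D : ℕ → Set Ω := fun k => {ω | ∀ i, |x tF ω i| ≤ (k : ℝ)} with hD
    set B : ℕ → Set Ω := fun k => A ∩ D k with hB
    have hDmeasF : ∀ k, MeasurableSet[𝔽 tF] (D k) := fun k =>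
      measurableSet_abs_le (m := 𝔽 tF) (hx tF) (k : ℝ)
    have hBmeasF : ∀ k, MeasurableSet[𝔽 tF] (B k) := fun k =>
      (hA tF le_rfl).inter (hDmeasF k)
    have hBmeas : ∀ k, MeasurableSet (B k) := fun k => h𝔽le tF _ (hBmeasF k)
    have hBsubA : ∀ k, B k ⊆ A := fun k => Set.inter_subset_left
    have hBmono : ∀ j k : ℕ, j ≤ k → B j ⊆ B k := by
      intro j k hjk ω hω
      exact ⟨hω.1, fun i => le_trans (hω.2 i) (by exact_mod_cast hjk)⟩
    have hBcover : ∀ ω ∈ A, ∃ k0 : ℕ, ∀ k, k0 ≤ k → ω ∈ B k := by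
      intro ω hω
      obtain ⟨k0, hk0⟩ := exists_nat_ge (∑ i, |x tF ω i|)
      refine ⟨k0, fun k hk => ⟨hω, fun i => ?_⟩⟩
      have h1 : |x tF ω i| ≤ ∑ j, |x tF ω j| :=
        Finset.single_le_sum (f := fun j => |x tF ω j|) (fun j _ => abs_nonneg _)
          (Finset.mem_univ i)
      have h2 : (k0 : ℝ) ≤ (k : ℝ) := by exact_mod_cast hk
      linarith
    -- integrability of the absolute row sum of v at time t
    have hvabs : Integrable (fun ω => ∑ i, |v tF ω i|) μ := by
      refine integrable_finset_sum _ fun i _ => ?_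
      refine Integrable.mono' (hvint tF).norm
        ((measurable_pi_apply i).comp (hvmeas tF)).abs.aestronglyMeasurable
        (ae_of_all μ fun ω => ?_)
      rw [Real.norm_eq_abs, abs_abs]
      exact norm_le_pi_norm (v tF ω) i
    have hvabs_nonneg : ∀ ω, 0 ≤ ∑ i, |v tF ω i| := fun ω =>
      Finset.sum_nonneg fun i _ => abs_nonneg _
    -- pointwise bound for the pairing term on B k
    have hPbd : ∀ k : ℕ, ∀ ω ∈ B k, |P t ω| ≤ (k : ℝ) * ∑ i, |v tF ω i| := by
      intro k ω hω
      have hPt : P t ω = ∑ i, x tF ω i * v tF ω i := by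
        simp only [hP]
        unfold pairTerm
        rw [dif_pos (show t < T + 1 by omega)]
      rw [hPt]
      calc |∑ i, x tF ω i * v tF ω i| ≤ ∑ i, |x tF ω i * v tF ω i| :=
            Finset.abs_sum_le_sum_abs _ _
        _ ≤ ∑ i, (k : ℝ) * |v tF ω i| := by
            refine Finset.sum_le_sum fun i _ => ?_
            rw [abs_mul]
            exact mul_le_mul_of_nonneg_right (hω.2 i) (abs_nonneg _)
        _ = (k : ℝ) * ∑ i, |v tF ω i| := by rw [Finset.mul_sum]
    -- hperp applied to the bounded adapted process supported at time t
    have hPzero : ∀ k : ℕ, ∫ ω, (B k).indicator (P t) ω ∂μ = 0 := by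
      intro k
      set y : ∀ s : Fin (T + 1), Ω → Fin (n s) → ℝ :=
        fun s ω i => if s = tF then (B k).indicator (fun ω' => x s ω' i) ω else 0 with hy
      have hymeas : ∀ s, Measurable[𝔽 s] (y s) := by
        intro s
        by_cases hs : s = tF
        · subst hs
          simp only [hy, if_pos rfl]
          exact measurable_indicator_pi (m := 𝔽 tF) (hx tF) (hBmeasF k)
        · simp only [hy, if_neg hs]
          exact measurable_zero_pi (m := 𝔽 s)
      have hybd : ∀ s, ∃ C : ℝ, ∀ ω, ∀ i, |y s ω i| ≤ C := by
        intro s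
        refine ⟨(k : ℝ), fun ω i => ?_⟩
        by_cases hs : s = tF
        · subst hs
          simp only [hy, if_pos rfl, Set.indicator_apply]
          split_ifs with hω
          · exact hω.2 i
          · simp
        · simp [hy, if_neg hs]
      have h0 := hperp y hymeas hybd
      have heq : ∀ ω, ∑ s : Fin (T + 1), ∑ i, y s ω i * v s ω i
          = (B k).indicator (P t) ω := by
        intro ω
        rw [Finset.sum_eq_single tF]
        · simp only [hy, if_pos rfl, Set.indicator_apply]
          have hPt : P t ω = ∑ i, x tF ω i * v tF ω i := by
            simp only [hP]
            unfold pairTerm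
            rw [dif_pos (show t < T + 1 by omega)]
          split_ifs with hω
          · rw [hPt]
          · simp
        · intro b _ hb
          simp [hy, if_neg hb]
        · intro h; exact absurd (Finset.mem_univ tF) h
      rw [← h0]
      exact integral_congr_ae (ae_of_all μ fun ω => (heq ω).symm)
    -- integrability of the truncated pairing term
    have hPint : ∀ k : ℕ, Integrable ((B k).indicator (P t)) μ := by
      intro k
      refine Integrable.mono' (hvabs.const_mul (k : ℝ))
        ((hPmeas t).indicator (hBmeas k)).aestronglyMeasurable (ae_of_all μ fun ω => ?_)
      rw [Real.norm_eq_abs, Set.indicator_apply]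
      split_ifs with hω
      · exact hPbd k ω hω
      · simp only [abs_zero]
        positivity
    -- positive-part integrability needed for the induction hypothesis
    have hBmaxint : ∀ k : ℕ, Integrable ((B k).indicator fun ω => max (S t ω) 0) μ := by
      intro k
      refine Integrable.mono' hApos
        (((hSmeas t).max measurable_const).indicator (hBmeas k)).aestronglyMeasurable
        (ae_of_all μ fun ω => ?_)
      rw [Real.norm_eq_abs, Set.indicator_apply]
      split_ifs with hω
      · rw [abs_of_nonneg (le_max_right _ _)]
        have hωA : ω ∈ A := hBsubA k hω
        simp [Set.indicator_apply, hωA]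
      · simp only [abs_zero, Set.indicator_apply]
        split_ifs
        · exact le_max_right _ _
        · exact le_refl 0
    -- positive part of the tail is integrable on B k
    have htailpos : ∀ k : ℕ,
        Integrable ((B k).indicator fun ω => max (S (t + 1) ω) 0) μ := by
      intro k
      refine Integrable.mono'
        (hApos.add (hvabs.const_mul (k : ℝ)))
        (((hSmeas (t + 1)).max measurable_const).indicator (hBmeas k)).aestronglyMeasurable
        (ae_of_all μ fun ω => ?_)
      rw [Real.norm_eq_abs, Set.indicator_apply]
      split_ifs with hω
      · rw [abs_of_nonneg (le_max_right _ _)]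
        have hωA : ω ∈ A := hBsubA k hω
        have h1 : max (S (t + 1) ω) 0 ≤ max (S t ω) 0 + |P t ω| := by
          refine max_le ?_ (by positivity)
          have : S (t + 1) ω = S t ω - P t ω := by rw [hSsucc ω]; ring
          rw [this]
          have := le_max_left (S t ω) 0
          have := neg_abs_le (P t ω)
          linarith
        have h2 : |P t ω| ≤ (k : ℝ) * ∑ i, |v tF ω i| := hPbd k ω hω
        have h3 : A.indicator (fun ω => max (S t ω) 0) ω = max (S t ω) 0 := by
          simp [Set.indicator_apply, hωA]
        simp only [Pi.add_apply]
        rw [h3]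
        linarith
      · simp only [abs_zero, Pi.add_apply]
        have : 0 ≤ A.indicator (fun ω => max (S t ω) 0) ω :=
          Set.indicator_nonneg (fun ω _ => le_max_right _ _) ω
        have h4 : 0 ≤ (k : ℝ) * ∑ i, |v tF ω i| := by positivity
        linarith
    -- apply the induction hypothesis on each B k
    have ihk : ∀ k : ℕ, Integrable ((B k).indicator (S (t + 1))) μ ∧
        ∫ ω, (B k).indicator (S (t + 1)) ω ∂μ = 0 := by
      intro k
      refine ih (t + 1) (by omega) (B k) (fun s hs => ?_) (htailpos k)
      refine h𝔽mono tF s ?_ _ (hBmeasF k)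
      rw [Fin.le_def]
      exact (show t ≤ (s : ℕ) by omega)
    -- decomposition of the truncated tail sum
    have hindS : ∀ k : ℕ, (B k).indicator (S t)
        = fun ω => (B k).indicator (P t) ω + (B k).indicator (S (t + 1)) ω := by
      intro k
      funext ω
      by_cases hω : ω ∈ B k <;> simp [Set.indicator_apply, hω, hSsucc ω]
    have hBint : ∀ k : ℕ, Integrable ((B k).indicator (S t)) μ := by
      intro k
      rw [hindS k]
      exact (hPint k).add (ihk k).1
    have hBzero : ∀ k : ℕ, ∫ ω, (B k).indicator (S t) ω ∂μ = 0 := by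
      intro k
      rw [hindS k]
      rw [integral_add (hPint k) (ihk k).1, hPzero k, (ihk k).2]
      ring
    -- the negative part
    set g : Ω → ℝ := fun ω => max (-(S t ω)) 0 with hg
    have hgmeas : Measurable g := (hSmeas t).neg.max measurable_const
    have hgnn : ∀ ω, 0 ≤ g ω := fun ω => le_max_right _ _
    have hgdecomp : ∀ (E : Set Ω), E.indicator g
        = fun ω => E.indicator (fun ω => max (S t ω) 0) ω - E.indicator (S t) ω := by
      intro E
      funext ω
      by_cases hω : ω ∈ E <;> simp [Set.indicator_apply, hω, hg, negPart_eq]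
    have hgBint : ∀ k, Integrable ((B k).indicator g) μ := by
      intro k
      rw [hgdecomp (B k)]
      exact (hBmaxint k).sub (hBint k)
    have hgBval : ∀ k, ∫ ω, (B k).indicator g ω ∂μ
        = ∫ ω, (B k).indicator (fun ω => max (S t ω) 0) ω ∂μ := by
      intro k
      rw [hgdecomp (B k), integral_sub (hBmaxint k) (hBint k), hBzero k, sub_zero]
    set C : ℝ := ∫ ω, A.indicator (fun ω => max (S t ω) 0) ω ∂μ with hC
    have hgBle : ∀ k, ∫ ω, (B k).indicator g ω ∂μ ≤ C := by
      intro k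
      rw [hgBval k]
      refine integral_mono (hBmaxint k) hApos fun ω => ?_
      exact Set.indicator_le_indicator_of_subset (hBsubA k) (fun ω => le_max_right _ _) ω
    set G : ℕ → Ω → ℝ≥0∞ := fun k ω => ENNReal.ofReal ((B k).indicator g ω) with hG
    have hGmeas : ∀ k, Measurable (G k) := fun k =>
      ENNReal.measurable_ofReal.comp (hgmeas.indicator (hBmeas k))
    have hGmono : ∀ j k : ℕ, j ≤ k → ∀ ω, G j ω ≤ G k ω := by
      intro j k hjk ω
      exact ENNReal.ofReal_le_ofReal
        (Set.indicator_le_indicator_of_subset (hBmono j k hjk) (fun ω => hgnn ω) ω)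
    have hGsup : ∀ ω, ⨆ k, G k ω = ENNReal.ofReal (A.indicator g ω) := by
      intro ω
      refine le_antisymm (iSup_le fun k => ENNReal.ofReal_le_ofReal
        (Set.indicator_le_indicator_of_subset (hBsubA k) (fun ω => hgnn ω) ω)) ?_
      by_cases hω : ω ∈ A
      · obtain ⟨k0, hk0⟩ := hBcover ω hω
        have h1 : A.indicator g ω = g ω := by simp [Set.indicator_apply, hω]
        have h2 : G k0 ω = ENNReal.ofReal (g ω) := by
          simp [hG, Set.indicator_apply, hk0 k0 le_rfl]
        rw [h1, ← h2]
        exact le_iSup (fun k => G k ω) k0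
      · simp [Set.indicator_apply, hω]
    have hlin : ∫⁻ ω, ENNReal.ofReal (A.indicator g ω) ∂μ ≤ ENNReal.ofReal C := by
      have h1 : ∫⁻ ω, ENNReal.ofReal (A.indicator g ω) ∂μ = ⨆ k, ∫⁻ ω, G k ω ∂μ := by
        rw [← lintegral_iSup hGmeas (fun j k h ω => hGmono j k h ω)]
        exact lintegral_congr fun ω => (hGsup ω).symm
      rw [h1]
      refine iSup_le fun k => ?_
      have h2 : ∫⁻ ω, G k ω ∂μ = ENNReal.ofReal (∫ ω, (B k).indicator g ω ∂μ) :=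
        (MeasureTheory.ofReal_integral_eq_lintegral_ofReal (hgBint k)
          (ae_of_all μ fun ω => Set.indicator_nonneg (fun ω _ => hgnn ω) ω)).symm
      rw [h2]
      exact ENNReal.ofReal_le_ofReal (hgBle k)
    have hAmeas : MeasurableSet A := h𝔽le tF _ (hA tF le_rfl)
    have hgAint : Integrable (A.indicator g) μ := by
      refine ⟨(hgmeas.indicator hAmeas).aestronglyMeasurable, ?_⟩
      rw [hasFiniteIntegral_iff_ofReal
        (ae_of_all μ fun ω => Set.indicator_nonneg (fun ω _ => hgnn ω) ω)]
      exact lt_of_le_of_lt hlin ENNReal.ofReal_lt_top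
    have hASint : Integrable (A.indicator (S t)) μ := by
      have hdec : A.indicator (S t)
          = fun ω => A.indicator (fun ω => max (S t ω) 0) ω - A.indicator g ω := by
        funext ω
        by_cases hω : ω ∈ A
        · simp only [Set.indicator_of_mem hω, hg, negPart_eq]
          ring
        · simp [Set.indicator_of_notMem hω]
      rw [hdec]
      exact hApos.sub hgAint
    have htend : Filter.Tendsto (fun k => ∫ ω, (B k).indicator (S t) ω ∂μ)
        Filter.atTop (nhds (∫ ω, A.indicator (S t) ω ∂μ)) := by
      refine tendsto_integral_of_dominated_convergence
        (fun ω => |A.indicator (S t) ω|)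
        (fun k => ((hSmeas t).indicator (hBmeas k)).aestronglyMeasurable)
        hASint.abs (fun k => ae_of_all μ fun ω => ?_) (ae_of_all μ fun ω => ?_)
      · rw [Real.norm_eq_abs, Set.indicator_apply]
        split_ifs with hω
        · have hωA : ω ∈ A := hBsubA k hω
          simp [Set.indicator_of_mem hωA]
        · simp [abs_nonneg]
      · by_cases hω : ω ∈ A
        · obtain ⟨k0, hk0⟩ := hBcover ω hω
          refine Filter.Tendsto.congr' ?_ tendsto_const_nhds
          refine (Filter.eventually_atTop.2 ⟨k0, fun k hk => ?_⟩)
          simp [Set.indicator_of_mem hω, Set.indicator_of_mem (hk0 k hk)]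
        · have h0 : A.indicator (S t) ω = 0 := Set.indicator_of_notMem hω _
          have h1 : (fun k => (B k).indicator (S t) ω) = fun _ => (0 : ℝ) :=
            funext fun k => Set.indicator_of_notMem (fun h => hω (hBsubA k h)) _
          rw [h0, h1]
          exact tendsto_const_nhds
    have hzero : ∫ ω, A.indicator (S t) ω ∂μ = 0 := by
      have h1 : (fun k : ℕ => ∫ ω, (B k).indicator (S t) ω ∂μ) = fun _ => (0 : ℝ) :=
        funext hBzero
      rw [h1] at htend
      exact tendsto_nhds_unique htend tendsto_const_nhds
    exact ⟨hASint, hzero⟩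

end PairingAux

open PairingAux in
/-- Let `N` be the space of adapted processes `(x_t)_{t=0}^T` with values in
`ℝ^{n_t}`, `N^∞` its bounded elements and `N^⊥` the annihilator of `N^∞` in `L¹`.
If `x ∈ N`, `v ∈ N^⊥` and `(x·v)⁺ ∈ L¹`, then `x·v ∈ L¹` and `E[x·v] = 0`. -/
theorem integral_pairing_eq_zero_of_posPart_integrable
    {Ω : Type*} [MeasurableSpace Ω] (μ : Measure Ω) [IsProbabilityMeasure μ]
    (T : ℕ) (n : Fin (T + 1) → ℕ)
    (𝔽 : Fin (T + 1) → MeasurableSpace Ω)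
    (h𝔽le : ∀ t, 𝔽 t ≤ ‹MeasurableSpace Ω›)
    (h𝔽mono : ∀ s t : Fin (T + 1), s ≤ t → 𝔽 s ≤ 𝔽 t)
    -- the process `x ∈ N` : adapted, not necessarily integrable
    (x : ∀ t : Fin (T + 1), Ω → Fin (n t) → ℝ)
    (hx : ∀ t, Measurable[𝔽 t] (x t))
    -- `v ∈ N^⊥` : integrable and annihilating every bounded adapted process
    (v : ∀ t : Fin (T + 1), Ω → Fin (n t) → ℝ)
    (hvmeas : ∀ t, Measurable (v t))
    (hvint : ∀ t, Integrable (fun ω => v t ω) μ)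
    (hperp : ∀ y : ∀ t : Fin (T + 1), Ω → Fin (n t) → ℝ,
      (∀ t, Measurable[𝔽 t] (y t)) → (∀ t, ∃ C : ℝ, ∀ ω, ∀ i, |y t ω i| ≤ C) →
      ∫ ω, ∑ t : Fin (T + 1), ∑ i : Fin (n t), y t ω i * v t ω i ∂μ = 0)
    -- `(x·v)⁺ ∈ L¹`
    (hpos : Integrable
      (fun ω => max (∑ t : Fin (T + 1), ∑ i : Fin (n t), x t ω i * v t ω i) 0) μ) :
    Integrable (fun ω => ∑ t : Fin (T + 1), ∑ i : Fin (n t), x t ω i * v t ω i) μ ∧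
      ∫ ω, ∑ t : Fin (T + 1), ∑ i : Fin (n t), x t ω i * v t ω i ∂μ = 0 := by
  classical
  have hfeq : (fun ω => ∑ t : Fin (T + 1), ∑ i : Fin (n t), x t ω i * v t ω i)
      = tailSum T n x v 0 := by
    funext ω
    unfold tailSum
    rw [← Finset.range_eq_Ico,
      ← Fin.sum_univ_eq_sum_range (fun s => pairTerm T n x v s ω) (T + 1)]
    refine Finset.sum_congr rfl fun s _ => ?_
    unfold pairTerm
    rw [dif_pos s.isLt]
  have h1 : Integrable (Set.univ.indicator
      fun ω => max (tailSum T n x v 0 ω) 0) μ := by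
    rw [Set.indicator_univ]
    have h2 : (fun ω => max (tailSum T n x v 0 ω) 0)
        = fun ω => max (∑ t : Fin (T + 1), ∑ i : Fin (n t), x t ω i * v t ω i) 0 := by
      rw [← hfeq]
    rw [h2]
    exact hpos
  obtain ⟨hint, hval⟩ := aux μ T n 𝔽 h𝔽le h𝔽mono x hx v hvmeas hvint hperp (T + 1) 0 (Nat.zero_add _)
    Set.univ (fun s _ => MeasurableSet.univ) h1
  rw [Set.indicator_univ] at hint hval
  constructor
  · rw [hfeq]; exact hint
  · rw [hfeq]; exact hval
end

section
/- Let V : ℝ → (−∞,+∞] be a proper lsc convex function with conjugate V*. Fix ω and define f(x, u) = V(u − Σ_{t=0}^{T−1} x_t · Δs_{t+1}) + δ₀(x_T) on ℝⁿ × ℝ. Then the convex conjugate of f is f*(v, y) = V*(y) + Σ_{t=0}^{T−1} δ₀(y Δs_{t+1} + v_t). -/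
open scoped ENNReal

noncomputable section Stmt6

variable (T J : ℕ)

/-- `Σ_{t=0}^{T-1} x_t · Δs_{t+1}` for fixed vectors `s_t ∈ ℝ^J`. -/
def gains (s : Fin (T + 1) → Fin J → ℝ) (x : Fin (T + 1) → Fin J → ℝ) : ℝ :=
  ∑ t : Fin T, ∑ j : Fin J, x t.castSucc j * (s t.succ j - s t.castSucc j)

/-- The integrand `f(x,u) = V(u − Σ x_t·Δs_{t+1}) + δ₀(x_T)` for `V : ℝ → (−∞,∞]`. -/
def fInt (s : Fin (T + 1) → Fin J → ℝ) (V : ℝ → EReal)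
    (x : Fin (T + 1) → Fin J → ℝ) (u : ℝ) : EReal :=
  V (u - gains T J s x) + (if x (Fin.last T) = 0 then (0 : EReal) else ⊤)

/-- The convex conjugate of `f`. -/
def fConj (s : Fin (T + 1) → Fin J → ℝ) (V : ℝ → EReal)
    (v : Fin (T + 1) → Fin J → ℝ) (y : ℝ) : EReal :=
  ⨆ (x : Fin (T + 1) → Fin J → ℝ) (u : ℝ),
    (((∑ t : Fin (T + 1), ∑ j : Fin J, x t j * v t j) + u * y : ℝ) : EReal) - fInt T J s V x u

/-- The convex conjugate of `V`. -/
def vConj (V : ℝ → EReal) (y : ℝ) : EReal :=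
  ⨆ u : ℝ, ((u * y : ℝ) : EReal) - V u

/-- `f*(v, y) = V*(y) + Σ_{t=0}^{T−1} δ₀(y Δs_{t+1} + v_t)`. -/
theorem fInt_conjugate_eq
    (s : Fin (T + 1) → Fin J → ℝ) (V : ℝ → EReal)
    (hproper : (∀ u, V u ≠ ⊥) ∧ ∃ u, V u ≠ ⊤)
    (hlsc : LowerSemicontinuous V)
    (hconv : ∀ a b lam : ℝ, 0 ≤ lam → lam ≤ 1 →
      V (lam * a + (1 - lam) * b) ≤ (lam : EReal) * V a + ((1 - lam : ℝ) : EReal) * V b)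
    (v : Fin (T + 1) → Fin J → ℝ) (y : ℝ) :
    fConj T J s V v y =
      vConj V y + ∑ t : Fin T,
        (if (fun j => y * (s t.succ j - s t.castSucc j) + v t.castSucc j) = (0 : Fin J → ℝ)
          then (0 : EReal) else ⊤) := by
  obtain ⟨hbot, u₀, hu₀⟩ := hproper
  set c : ℝ := (V u₀).toReal with hc
  have hV0 : V u₀ = ((c : ℝ) : EReal) := (EReal.coe_toReal hu₀ (hbot u₀)).symm
  have hvne : vConj V y ≠ ⊥ := by
    have h1 : ((u₀ * y - c : ℝ) : EReal) ≤ vConj V y := by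
      have h2 : ((u₀ * y : ℝ) : EReal) - V u₀ = ((u₀ * y - c : ℝ) : EReal) := by
        rw [hV0, ← EReal.coe_sub]
      rw [← h2]
      exact le_iSup (fun u => ((u * y : ℝ) : EReal) - V u) u₀
    intro h
    rw [h, le_bot_iff] at h1
    exact (EReal.coe_ne_bot _) h1
  by_cases hCall : ∀ t : Fin T,
      (fun j => y * (s t.succ j - s t.castSucc j) + v t.castSucc j) = (0 : Fin J → ℝ)
  · -- all constraints satisfied: RHS = vConj
    have hsum : (∑ t : Fin T,
        (if (fun j => y * (s t.succ j - s t.castSucc j) + v t.castSucc j) = (0 : Fin J → ℝ)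
          then (0 : EReal) else ⊤)) = 0 :=
      Finset.sum_eq_zero fun t _ => if_pos (hCall t)
    rw [hsum, add_zero]
    apply le_antisymm
    · refine iSup₂_le fun x u => ?_
      by_cases hxT : x (Fin.last T) = 0
      · have hfInt : fInt T J s V x u = V (u - gains T J s x) := by
          rw [fInt, if_pos hxT, add_zero]
        have hlin : (∑ t : Fin (T + 1), ∑ j : Fin J, x t j * v t j) + u * y
            = (u - gains T J s x) * y := by
          have hlast : ∑ j : Fin J, x (Fin.last T) j * v (Fin.last T) j = 0 := by
            rw [hxT]; simp
          rw [Fin.sum_univ_castSucc, hlast, add_zero]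
          have hmain : (∑ t : Fin T, ∑ j : Fin J, x t.castSucc j * v t.castSucc j)
              = -(y * gains T J s x) := by
            rw [gains, Finset.mul_sum, ← Finset.sum_neg_distrib]
            refine Finset.sum_congr rfl fun t _ => ?_
            rw [Finset.mul_sum, ← Finset.sum_neg_distrib]
            refine Finset.sum_congr rfl fun j _ => ?_
            have hv : y * (s t.succ j - s t.castSucc j) + v t.castSucc j = 0 :=
              congrFun (hCall t) j
            have hvv : v t.castSucc j = -(y * (s t.succ j - s t.castSucc j)) := by linarith
            rw [hvv]; ring
          rw [hmain]; ring
        rw [hfInt, hlin]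
        exact le_iSup (fun w => ((w * y : ℝ) : EReal) - V w) (u - gains T J s x)
      · have hfInt : fInt T J s V x u = ⊤ := by
          rw [fInt, if_neg hxT, EReal.add_top_of_ne_bot (hbot _)]
        rw [hfInt, EReal.sub_top]
        exact bot_le
    · refine iSup_le fun w => ?_
      have h0 : (((∑ t : Fin (T + 1), ∑ j : Fin J, (0 : Fin (T+1) → Fin J → ℝ) t j * v t j)
            + w * y : ℝ) : EReal) - fInt T J s V 0 w
          = ((w * y : ℝ) : EReal) - V w := by
        have hg : gains T J s (0 : Fin (T+1) → Fin J → ℝ) = 0 := by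
          simp [gains]
        have hf : fInt T J s V 0 w = V w := by
          rw [fInt, hg, sub_zero]
          simp
        rw [hf]
        norm_num
      calc ((w * y : ℝ) : EReal) - V w
          = (((∑ t : Fin (T + 1), ∑ j : Fin J, (0 : Fin (T+1) → Fin J → ℝ) t j * v t j)
            + w * y : ℝ) : EReal) - fInt T J s V 0 w := h0.symm
        _ ≤ fConj T J s V v y := by
            exact le_iSup₂_of_le (0 : Fin (T+1) → Fin J → ℝ) w le_rfl
  · -- some constraint violated: both sides are ⊤
    push_neg at hCall
    obtain ⟨t₀, ht₀⟩ := hCall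
    obtain ⟨j₀, hj₀⟩ := Function.ne_iff.mp ht₀
    set Δ : ℝ := s t₀.succ j₀ - s t₀.castSucc j₀ with hΔ
    set a : ℝ := y * Δ + v t₀.castSucc j₀ with ha
    have hane : a ≠ 0 := by simpa using hj₀
    have hsum : (∑ t : Fin T,
        (if (fun j => y * (s t.succ j - s t.castSucc j) + v t.castSucc j) = (0 : Fin J → ℝ)
          then (0 : EReal) else ⊤)) = ⊤ := by
      refine top_unique ?_
      calc (⊤ : EReal)
          = (if (fun j => y * (s t₀.succ j - s t₀.castSucc j) + v t₀.castSucc j) = (0 : Fin J → ℝ)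
              then (0 : EReal) else ⊤) := (if_neg ht₀).symm
        _ ≤ _ := Finset.single_le_sum (f := fun t =>
              (if (fun j => y * (s t.succ j - s t.castSucc j) + v t.castSucc j) = (0 : Fin J → ℝ)
                then (0 : EReal) else ⊤))
              (fun t _ => by split_ifs <;> simp) (Finset.mem_univ t₀)
    rw [hsum, EReal.add_top_of_ne_bot hvne]
    rw [EReal.eq_top_iff_forall_lt]
    intro M
    have key : ∀ M' : ℝ, (M' : EReal) ≤ fConj T J s V v y := by
      intro M'
      set r : ℝ := (M' - (u₀ * y - c)) / (a * a) with hr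
      set x : Fin (T + 1) → Fin J → ℝ :=
        fun t j => if t = t₀.castSucc ∧ j = j₀ then r * a else 0 with hx
      have hxT : x (Fin.last T) = 0 := by
        funext j
        show (if Fin.last T = t₀.castSucc ∧ j = j₀ then r * a else 0) = 0
        exact if_neg (by rintro ⟨h1, -⟩; exact (Fin.castSucc_lt_last t₀).ne' h1)
      have hG : gains T J s x = r * a * Δ := by
        rw [gains]
        rw [Finset.sum_eq_single t₀]
        · rw [Finset.sum_eq_single j₀]
          · rw [hx]; simp [hΔ]
          · intro b _ hb
            rw [hx]
            simp only
            rw [if_neg (fun h => hb h.2), zero_mul]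
          · intro h; exact absurd (Finset.mem_univ j₀) h
        · intro b _ hb
          refine Finset.sum_eq_zero fun j _ => ?_
          rw [hx]
          simp only
          rw [if_neg, zero_mul]
          rintro ⟨h1, -⟩
          exact hb (Fin.castSucc_inj.mp h1)
        · intro h; exact absurd (Finset.mem_univ t₀) h
      set u : ℝ := u₀ + r * a * Δ with hu
      have hfInt : fInt T J s V x u = V u₀ := by
        rw [fInt, if_pos hxT, add_zero, hG, hu]
        ring_nf
      have hlin : (∑ t : Fin (T + 1), ∑ j : Fin J, x t j * v t j)
          = r * a * v t₀.castSucc j₀ := by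
        rw [Finset.sum_eq_single t₀.castSucc]
        · rw [Finset.sum_eq_single j₀]
          · rw [hx]; simp
          · intro b _ hb
            rw [hx]
            simp only
            rw [if_neg (fun h => hb h.2), zero_mul]
          · intro h; exact absurd (Finset.mem_univ j₀) h
        · intro b _ hb
          refine Finset.sum_eq_zero fun j _ => ?_
          rw [hx]
          simp only
          rw [if_neg, zero_mul]
          rintro ⟨h1, -⟩
          exact hb h1
        · intro h; exact absurd (Finset.mem_univ t₀.castSucc) h
      have hval : (((∑ t : Fin (T + 1), ∑ j : Fin J, x t j * v t j) + u * y : ℝ) : EReal)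
          - fInt T J s V x u = (M' : EReal) := by
        rw [hfInt, hV0, hlin, hu, ← EReal.coe_sub]
        norm_cast
        have haa : a * a ≠ 0 := mul_ne_zero hane hane
        have : r * a * v t₀.castSucc j₀ + (u₀ + r * a * Δ) * y - c
            = r * (a * a) + (u₀ * y - c) := by
          have hva : v t₀.castSucc j₀ = a - y * Δ := by rw [ha]; ring
          rw [hva]; ring
        rw [this, hr, div_mul_cancel₀ _ haa]
        ring
      calc (M' : EReal)
          = (((∑ t : Fin (T + 1), ∑ j : Fin J, x t j * v t j) + u * y : ℝ) : EReal)
            - fInt T J s V x u := hval.symm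
        _ ≤ fConj T J s V v y := le_iSup₂_of_le x u le_rfl
    calc (M : EReal) < ((M + 1 : ℝ) : EReal) := by exact_mod_cast lt_add_one M
      _ ≤ fConj T J s V v y := key (M + 1)

end Stmt6
end

section
/- Let f : ℝⁿ × ℝᵐ → (−∞,+∞] be proper lsc convex and suppose f(x, u) ≥ x·v + λ[x·v]⁺ + β for all (x,u), where v ∈ ℝⁿ, λ > 0, β ∈ ℝ. Then the recession function satisfies f^∞(x, 0) ≥ x·v + λ[x·v]⁺ for all x ∈ ℝⁿ. Consequently, if f^∞(x,0) ≤ 0 then x·v ≤ 0, and if f^∞(x,0) − x·v ≤ 0 then [x·v]⁺ = 0. -/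
open scoped ENNReal

noncomputable section Stmt8

variable (n m : ℕ)

def dot {k : ℕ} (a b : Fin k → ℝ) : ℝ := ∑ i, a i * b i

/-- Recession function of `f` from a base point `(x̄, ū) ∈ dom f`. -/
def recFn (f : (Fin n → ℝ) → (Fin m → ℝ) → EReal)
    (xb : Fin n → ℝ) (ub : Fin m → ℝ) (x : Fin n → ℝ) (u : Fin m → ℝ) : EReal :=
  ⨆ α : {a : ℝ // 0 < a},
    (((α.1)⁻¹ : ℝ) : EReal) * (f (xb + α.1 • x) (ub + α.1 • u) - f xb ub)

lemma dot_add_smul {k : ℕ} (xb x v : Fin k → ℝ) (α : ℝ) :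
    dot (xb + α • x) v = dot xb v + α * dot x v := by
  unfold dot
  rw [Finset.mul_sum, ← Finset.sum_add_distrib]
  apply Finset.sum_congr rfl
  intro i _
  simp only [Pi.add_apply, Pi.smul_apply, smul_eq_mul]
  ring

lemma ereal_le_of_forall_sub (T : ℝ) (s : EReal)
    (h : ∀ ε : ℝ, 0 < ε → ((T - ε : ℝ) : EReal) ≤ s) : (T : EReal) ≤ s := by
  by_contra hc
  push_neg at hc
  obtain ⟨z, hz1, hz2⟩ := EReal.exists_between_coe_real hc
  have hε : (0:ℝ) < T - z := by
    have := EReal.coe_lt_coe_iff.mp hz2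
    linarith
  have := h (T - z) hε
  simp only [sub_sub_cancel] at this
  exact absurd (lt_of_le_of_lt this hz1) (lt_irrefl _)

/-- If `f(x,u) ≥ x·v + λ[x·v]⁺ + β` for all `(x,u)` then
`f^∞(x,0) ≥ x·v + λ[x·v]⁺`; consequently `f^∞(x,0) ≤ 0 ⟹ x·v ≤ 0` and
`f^∞(x,0) − x·v ≤ 0 ⟹ [x·v]⁺ = 0`. -/
theorem recession_lower_bound
    (f : (Fin n → ℝ) → (Fin m → ℝ) → EReal)
    (hproper : (∀ x u, f x u ≠ ⊥) ∧ ∃ x u, f x u ≠ ⊤)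
    (hlsc : LowerSemicontinuous (fun p : (Fin n → ℝ) × (Fin m → ℝ) => f p.1 p.2))
    (hconv : ∀ (x x' : Fin n → ℝ) (u u' : Fin m → ℝ) (lam : ℝ), 0 ≤ lam → lam ≤ 1 →
      f (lam • x + (1 - lam) • x') (lam • u + (1 - lam) • u') ≤
        (lam : EReal) * f x u + ((1 - lam : ℝ) : EReal) * f x' u')
    (v : Fin n → ℝ) (lam β : ℝ) (hlam : 0 < lam)
    (hbound : ∀ x u, ((dot x v + lam * max (dot x v) 0 + β : ℝ) : EReal) ≤ f x u)
    (xb : Fin n → ℝ) (ub : Fin m → ℝ) (hdom : f xb ub ≠ ⊤) :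
    (∀ x : Fin n → ℝ,
        ((dot x v + lam * max (dot x v) 0 : ℝ) : EReal) ≤ recFn n m f xb ub x 0) ∧
    (∀ x : Fin n → ℝ, recFn n m f xb ub x 0 ≤ 0 → dot x v ≤ 0) ∧
    (∀ x : Fin n → ℝ,
        recFn n m f xb ub x 0 - ((dot x v : ℝ) : EReal) ≤ 0 → max (dot x v) 0 = 0) := by
  obtain ⟨hbot, -⟩ := hproper
  obtain ⟨M, hM⟩ : ∃ M : ℝ, f xb ub = (M : EReal) :=
    ⟨(f xb ub).toReal, (EReal.coe_toReal hdom (hbot xb ub)).symm⟩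
  -- the key lower bound
  have key : ∀ x : Fin n → ℝ,
      ((dot x v + lam * max (dot x v) 0 : ℝ) : EReal) ≤ recFn n m f xb ub x 0 := by
    intro x
    set a := dot x v with ha
    set c := dot xb v with hc
    set K := c - lam * |c| + β - M with hK
    apply ereal_le_of_forall_sub
    intro ε hε
    set α := (|K| + 1) / ε with hα
    have hαpos : 0 < α := div_pos (by positivity) hε
    -- real-number estimate
    have hreal : a + lam * max a 0 - ε ≤
        α⁻¹ * ((c + α * a + lam * max (c + α * a) 0 + β) - M) := by
      have h1 : α * max a 0 - |c| ≤ max (c + α * a) 0 := by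
        have habs : |max (α * a) 0 - max (c + α * a) 0| ≤ |α * a - (c + α * a)| :=
          abs_max_sub_max_le_abs _ _ _
        have h2 : α * max a 0 = max (α * a) 0 := by
          rcases le_total a 0 with h | h
          · rw [max_eq_right h, max_eq_right (by nlinarith), mul_zero]
          · rw [max_eq_left h, max_eq_left (by nlinarith)]
        have h3 : |α * a - (c + α * a)| = |c| := by rw [show α * a - (c + α * a) = -c by ring, abs_neg]
        rw [h3] at habs
        have := abs_le.mp habs
        linarith [h2 ▸ this.2]
      have hKα : -ε ≤ K / α := by
        rw [le_div_iff₀ hαpos]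
        have hne : (ε:ℝ) ≠ 0 := ne_of_gt hε
        have : -ε * α = -(|K| + 1) := by
          rw [hα]; field_simp
        rw [this]
        have := neg_abs_le K
        linarith
      have heq : α⁻¹ * ((c + α * a + lam * (α * max a 0 - |c|) + β) - M)
          = a + lam * max a 0 + K / α := by
        have hne : α ≠ 0 := ne_of_gt hαpos
        field_simp
        ring
      have hmono : α⁻¹ * ((c + α * a + lam * (α * max a 0 - |c|) + β) - M) ≤
          α⁻¹ * ((c + α * a + lam * max (c + α * a) 0 + β) - M) := by
        apply mul_le_mul_of_nonneg_left _ (inv_nonneg.mpr hαpos.le)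
        have := mul_le_mul_of_nonneg_left h1 hlam.le
        linarith
      linarith [heq ▸ hmono, hKα]
    -- pass to EReal via the supremum at this α
    refine le_trans ?_ (le_iSup (fun (α' : {a : ℝ // 0 < a}) =>
        (((α'.1)⁻¹ : ℝ) : EReal) * (f (xb + α'.1 • x) (ub + α'.1 • (0 : Fin m → ℝ)) - f xb ub))
        ⟨α, hαpos⟩)
    have hub : ub + α • (0 : Fin m → ℝ) = ub := by simp
    simp only [hub, hM]
    have hXlb : ((c + α * a + lam * max (c + α * a) 0 + β : ℝ) : EReal) ≤ f (xb + α • x) ub := by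
      have := hbound (xb + α • x) ub
      rwa [dot_add_smul, ← hc, ← ha] at this
    rcases eq_or_ne (f (xb + α • x) ub) ⊤ with hX | hX
    · rw [hX, EReal.top_sub_coe, EReal.mul_top_of_pos (by exact_mod_cast inv_pos.mpr hαpos)]
      exact le_top
    · obtain ⟨r, hr⟩ : ∃ r : ℝ, f (xb + α • x) ub = (r : EReal) :=
        ⟨_, (EReal.coe_toReal hX (hbot _ _)).symm⟩
      rw [hr] at hXlb ⊢
      rw [← EReal.coe_sub, ← EReal.coe_mul, EReal.coe_le_coe_iff] at *
      have hrge : c + α * a + lam * max (c + α * a) 0 + β ≤ r := by exact_mod_cast hXlb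
      have : α⁻¹ * ((c + α * a + lam * max (c + α * a) 0 + β) - M) ≤ α⁻¹ * (r - M) :=
        mul_le_mul_of_nonneg_left (by linarith) (inv_nonneg.mpr hαpos.le)
      linarith
  refine ⟨key, ?_, ?_⟩
  · intro x h0
    have hk := (key x).trans h0
    rw [show (0:EReal) = ((0:ℝ):EReal) by simp, EReal.coe_le_coe_iff] at hk
    nlinarith [le_max_right (dot x v) 0, mul_nonneg hlam.le (le_max_right (dot x v) 0)]
  · intro x h0
    have hk := key x
    rcases eq_or_ne (recFn n m f xb ub x 0) ⊤ with hs | hs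
    · rw [hs, EReal.top_sub_coe] at h0
      exact absurd h0 (by simp)
    · have hsb : recFn n m f xb ub x 0 ≠ ⊥ := by
        intro h
        rw [h] at hk
        exact absurd hk (not_le.mpr (EReal.bot_lt_coe _))
      obtain ⟨r, hr⟩ : ∃ r : ℝ, recFn n m f xb ub x 0 = (r : EReal) :=
        ⟨_, (EReal.coe_toReal hs hsb).symm⟩
      rw [hr, EReal.coe_le_coe_iff] at hk
      rw [hr, ← EReal.coe_sub, show (0:EReal) = ((0:ℝ):EReal) by simp,
        EReal.coe_le_coe_iff] at h0
      have h1 : max (dot x v) 0 ≤ 0 := by nlinarith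
      exact le_antisymm h1 (le_max_right _ _)

end Stmt8
end

section
/- Let g : ℝᵐ → ℝ be a finite convex function and let (Eg)(u) := E[g(u(ω))] be finite for u in a decomposable space U ⊆ L⁰. Then the recession function of the convex function Eg on U satisfies (Eg)^∞(u) = E[g^∞(u)], where g^∞ is the pointwise recession function (by monotone convergence). -/
open MeasureTheory
open scoped ENNReal

noncomputable section Stmt9
open scoped Classical

/-- Positive part of an extended real, as an element of `ℝ≥0∞`. -/
def EReal.posPart (a : EReal) : ℝ≥0∞ :=
  if a = ⊤ then ⊤ else ENNReal.ofReal a.toReal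

/-- Expectation of an extended-real function: `+∞` unless the positive part is integrable. -/
def eexp {Ω : Type*} [MeasurableSpace Ω] (μ : Measure Ω) (φ : Ω → EReal) : EReal :=
  if (∫⁻ ω, (φ ω).posPart ∂μ) = ⊤ then ⊤
  else ((∫⁻ ω, (φ ω).posPart ∂μ : ℝ≥0∞) : EReal) - ((∫⁻ ω, (-(φ ω)).posPart ∂μ : ℝ≥0∞) : EReal)

/-- Pointwise recession function of a finite convex `g` (base point `0`). -/
def gRec {m : ℕ} (g : (Fin m → ℝ) → ℝ) (z : Fin m → ℝ) : EReal :=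
  ⨆ α : {a : ℝ // 0 < a}, (((g (α.1 • z) - g 0) / α.1 : ℝ) : EReal)

/-! ### Auxiliary lemmas -/

lemma stmt9_posPart_coe (x : ℝ) : EReal.posPart (x : EReal) = ENNReal.ofReal x := by
  simp [EReal.posPart]

lemma stmt9_posPart_mono {a b : EReal} (h : a ≤ b) : a.posPart ≤ b.posPart := by
  unfold EReal.posPart
  by_cases hb : b = ⊤
  · simp [hb]
  · have ha : a ≠ ⊤ := fun h' => hb (top_le_iff.mp (h' ▸ h))
    rw [if_neg ha, if_neg hb]
    by_cases hab : a = ⊥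
    · simp [hab]
    · exact ENNReal.ofReal_le_ofReal (EReal.toReal_le_toReal h hab hb)

lemma stmt9_eexp_congr {Ω : Type*} [MeasurableSpace Ω] {μ : Measure Ω}
    {φ ψ : Ω → EReal} (h : φ =ᵐ[μ] ψ) : eexp μ φ = eexp μ ψ := by
  have h1 : (∫⁻ ω, (φ ω).posPart ∂μ) = ∫⁻ ω, (ψ ω).posPart ∂μ :=
    lintegral_congr_ae (h.mono fun ω hω => by show (φ ω).posPart = (ψ ω).posPart; rw [hω])
  have h2 : (∫⁻ ω, (-(φ ω)).posPart ∂μ) = ∫⁻ ω, (-(ψ ω)).posPart ∂μ :=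
    lintegral_congr_ae (h.mono fun ω hω => by show (-(φ ω)).posPart = (-(ψ ω)).posPart; rw [hω])
  unfold eexp
  rw [h1, h2]

lemma stmt9_lintegral_posPart_coe {Ω : Type*} [MeasurableSpace Ω] {μ : Measure Ω}
    {h : Ω → ℝ} (hint : Integrable h μ) :
    (∫⁻ ω, EReal.posPart ((h ω : ℝ) : EReal) ∂μ) = ENNReal.ofReal (∫ ω, max (h ω) 0 ∂μ) := by
  have e1 : ∀ ω, EReal.posPart ((h ω : ℝ) : EReal) = ENNReal.ofReal (max (h ω) 0) := by
    intro ω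
    rw [stmt9_posPart_coe]
    rcases le_total (h ω) 0 with hc | hc
    · simp [ENNReal.ofReal_eq_zero.2 hc, max_eq_right hc]
    · rw [max_eq_left hc]
  calc (∫⁻ ω, EReal.posPart ((h ω : ℝ) : EReal) ∂μ)
      = ∫⁻ ω, ENNReal.ofReal (max (h ω) 0) ∂μ := by simp_rw [e1]
    _ = ENNReal.ofReal (∫ ω, max (h ω) 0 ∂μ) := by
        rw [ofReal_integral_eq_lintegral_ofReal hint.pos_part
          (Filter.Eventually.of_forall fun ω => le_max_right _ _)]

/-- `eexp` of (the coercion of) an integrable real function is its integral. -/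
lemma stmt9_eexp_coe {Ω : Type*} [MeasurableSpace Ω] {μ : Measure Ω}
    {h : Ω → ℝ} (hint : Integrable h μ) :
    eexp μ (fun ω => ((h ω : ℝ) : EReal)) = ((∫ ω, h ω ∂μ : ℝ) : EReal) := by
  have hP : (∫⁻ ω, EReal.posPart ((h ω : ℝ) : EReal) ∂μ)
      = ENNReal.ofReal (∫ ω, max (h ω) 0 ∂μ) := stmt9_lintegral_posPart_coe hint
  have hN : (∫⁻ ω, EReal.posPart (-((h ω : ℝ) : EReal)) ∂μ)
      = ENNReal.ofReal (∫ ω, max (-(h ω)) 0 ∂μ) := by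
    have : ∀ ω, (-((h ω : ℝ) : EReal)) = (((-(h ω) : ℝ)) : EReal) := fun ω => (EReal.coe_neg _).symm
    simp_rw [this]
    exact stmt9_lintegral_posPart_coe hint.neg
  unfold eexp
  rw [hP, hN, if_neg (by exact ENNReal.ofReal_ne_top)]
  have h1 : (0:ℝ) ≤ ∫ ω, max (h ω) 0 ∂μ :=
    integral_nonneg fun ω => le_max_right _ _
  have h2 : (0:ℝ) ≤ ∫ ω, max (-(h ω)) 0 ∂μ :=
    integral_nonneg fun ω => le_max_right _ _
  rw [EReal.coe_ennreal_ofReal, EReal.coe_ennreal_ofReal,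
    max_eq_left h1, max_eq_left h2, ← EReal.coe_sub]
  congr 1
  have := integral_eq_integral_pos_part_sub_integral_neg_part hint
  simp_rw [Real.coe_toNNReal'] at this
  linarith [this]

/-- Reduction of a supremum over positive reals to a supremum over naturals,
for a monotone family. -/
lemma stmt9_sup_nat (s : ℝ → EReal) (hs : ∀ a b : ℝ, 0 < a → a ≤ b → s a ≤ s b) :
    (⨆ α : {a : ℝ // 0 < a}, s α.1) = ⨆ n : ℕ, s ((n : ℝ) + 1) := by
  apply le_antisymm
  · apply iSup_le
    intro α
    obtain ⟨n, hn⟩ := exists_nat_ge α.1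
    exact le_iSup_of_le n (hs α.1 ((n : ℝ) + 1) α.2 (hn.trans (by linarith)))
  · apply iSup_le
    intro n
    exact le_iSup_of_le (⟨(n : ℝ) + 1, by positivity⟩ : {a : ℝ // 0 < a}) le_rfl

/-- Monotonicity of difference quotients for a convex function. -/
lemma stmt9_slope_mono {m : ℕ} {g : (Fin m → ℝ) → ℝ} (hg : ConvexOn ℝ Set.univ g)
    (z : Fin m → ℝ) {a b : ℝ} (ha : 0 < a) (hab : a ≤ b) :
    (g (a • z) - g 0) / a ≤ (g (b • z) - g 0) / b := by
  have hb : 0 < b := lt_of_lt_of_le ha hab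
  have ht0 : (0:ℝ) ≤ a / b := by positivity
  have ht1 : a / b ≤ 1 := div_le_one_of_le₀ hab hb.le
  have key : g ((a / b) • (b • z) + (1 - a / b) • (0 : Fin m → ℝ)) ≤
      (a / b) • g (b • z) + (1 - a / b) • g 0 :=
    hg.2 (Set.mem_univ (b • z)) (Set.mem_univ (0 : Fin m → ℝ)) ht0 (by linarith) (by ring)
  have hsm : (a / b) • (b • z) + (1 - a / b) • (0 : Fin m → ℝ) = a • z := by
    rw [smul_zero, add_zero, smul_smul, div_mul_cancel₀ _ hb.ne']
  rw [hsm, smul_eq_mul, smul_eq_mul] at key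
  have key' := mul_le_mul_of_nonneg_right key hb.le
  have e : (a / b * g (b • z) + (1 - a / b) * g 0) * b = a * g (b • z) + (b - a) * g 0 := by
    field_simp
  rw [div_le_div_iff₀ ha hb]
  linarith [key', e]

/-- Monotone convergence for `eexp`. -/
lemma stmt9_eexp_mct {Ω : Type*} [MeasurableSpace Ω] (μ : Measure Ω)
    (f : ℕ → Ω → ℝ) (hf : ∀ n, Integrable (f n) μ)
    (hmono : ∀ ω, Monotone fun n => f n ω) :
    (⨆ n : ℕ, ((∫ ω, f n ω ∂μ : ℝ) : EReal)) =
      eexp μ (fun ω => ⨆ n : ℕ, ((f n ω : ℝ) : EReal)) := by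
  set I : ℕ → ℝ := fun n => ∫ ω, f n ω ∂μ with hI
  have hφmeas : ∀ n : ℕ, AEMeasurable (fun ω => ENNReal.ofReal (f n ω - f 0 ω)) μ := fun n =>
    ((hf n).aemeasurable.sub (hf 0).aemeasurable).ennreal_ofReal
  have hφmono : ∀ ω, Monotone fun n => ENNReal.ofReal (f n ω - f 0 ω) := fun ω n k hnk =>
    ENNReal.ofReal_le_ofReal (sub_le_sub_right (hmono ω hnk) (f 0 ω))
  have hΦmeas : AEMeasurable (fun ω => ⨆ n, ENNReal.ofReal (f n ω - f 0 ω)) μ :=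
    AEMeasurable.iSup hφmeas
  have hS : (∫⁻ ω, ⨆ n, ENNReal.ofReal (f n ω - f 0 ω) ∂μ) =
      ⨆ n, ∫⁻ ω, ENNReal.ofReal (f n ω - f 0 ω) ∂μ :=
    lintegral_iSup' hφmeas (Filter.Eventually.of_forall hφmono)
  have hφint : ∀ n, (∫⁻ ω, ENNReal.ofReal (f n ω - f 0 ω) ∂μ) = ENNReal.ofReal (I n - I 0) := by
    intro n
    have hnn : (0 : Ω → ℝ) ≤ᵐ[μ] fun ω => f n ω - f 0 ω :=
      Filter.Eventually.of_forall fun ω => by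
        have h := hmono ω (Nat.zero_le n)
        simp only [Pi.zero_apply]
        exact sub_nonneg.2 h
    have hint : Integrable (fun ω => f n ω - f 0 ω) μ := (hf n).sub (hf 0)
    rw [← ofReal_integral_eq_lintegral_ofReal hint hnn, integral_sub (hf n) (hf 0)]
  have hImono : Monotone I := fun n k hnk =>
    integral_mono (hf n) (hf k) fun ω => hmono ω hnk
  by_cases hStop : (∫⁻ ω, ⨆ n, ENNReal.ofReal (f n ω - f 0 ω) ∂μ) = ⊤
  · -- both sides are ⊤
    have hub : ∀ M : ℝ, ∃ n, M < I n := by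
      intro M
      by_contra hcon
      push_neg at hcon
      have hle : (∫⁻ ω, ⨆ n, ENNReal.ofReal (f n ω - f 0 ω) ∂μ) ≤ ENNReal.ofReal (M - I 0) := by
        rw [hS]
        exact iSup_le fun n => by
          rw [hφint n]; exact ENNReal.ofReal_le_ofReal (by linarith [hcon n])
      exact (hle.trans_lt ENNReal.ofReal_lt_top).ne hStop
    have hL : (⨆ n : ℕ, ((I n : ℝ) : EReal)) = ⊤ := by
      rw [iSup_eq_top]
      intro b hb
      induction b using EReal.rec with
      | bot => exact ⟨0, bot_lt_iff_ne_bot.2 (EReal.coe_ne_bot _)⟩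
      | coe x =>
        obtain ⟨n, hn⟩ := hub x
        exact ⟨n, EReal.coe_lt_coe_iff.2 hn⟩
      | top => exact absurd hb (lt_irrefl _)
    have hR : eexp μ (fun ω => ⨆ n : ℕ, ((f n ω : ℝ) : EReal)) = ⊤ := by
      have hbound : ∀ ω, (⨆ n, ENNReal.ofReal (f n ω - f 0 ω)) ≤
          (⨆ n : ℕ, ((f n ω : ℝ) : EReal)).posPart + ENNReal.ofReal (max (-(f 0 ω)) 0) := by
        intro ω
        apply iSup_le
        intro n
        have h1 : ENNReal.ofReal (f n ω - f 0 ω) ≤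
            ENNReal.ofReal (f n ω + max (-(f 0 ω)) 0) :=
          ENNReal.ofReal_le_ofReal (by
            have := le_max_left (-(f 0 ω)) (0:ℝ); linarith)
        refine h1.trans (ENNReal.ofReal_add_le.trans ?_)
        gcongr
        have h2 : ((f n ω : ℝ) : EReal) ≤ ⨆ n : ℕ, ((f n ω : ℝ) : EReal) :=
          le_iSup (fun n : ℕ => ((f n ω : ℝ) : EReal)) n
        have h3 := stmt9_posPart_mono h2
        rwa [stmt9_posPart_coe] at h3
      have hNfin : (∫⁻ ω, ENNReal.ofReal (max (-(f 0 ω)) 0) ∂μ) ≠ ⊤ := by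
        rw [← ofReal_integral_eq_lintegral_ofReal
          (show Integrable (fun ω => max (-(f 0 ω)) 0) μ from (hf 0).neg.pos_part)
          (Filter.Eventually.of_forall fun ω => by
            simp only [Pi.zero_apply]; exact le_max_right _ _)]
        exact ENNReal.ofReal_ne_top
      have hptop : (∫⁻ ω, (⨆ n : ℕ, ((f n ω : ℝ) : EReal)).posPart ∂μ) = ⊤ := by
        by_contra hne
        have hle : (∫⁻ ω, ⨆ n, ENNReal.ofReal (f n ω - f 0 ω) ∂μ) ≤
            (∫⁻ ω, (⨆ n : ℕ, ((f n ω : ℝ) : EReal)).posPart ∂μ)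
              + ∫⁻ ω, ENNReal.ofReal (max (-(f 0 ω)) 0) ∂μ := by
          calc (∫⁻ ω, ⨆ n, ENNReal.ofReal (f n ω - f 0 ω) ∂μ)
              ≤ ∫⁻ ω, ((⨆ n : ℕ, ((f n ω : ℝ) : EReal)).posPart
                  + ENNReal.ofReal (max (-(f 0 ω)) 0)) ∂μ := lintegral_mono hbound
            _ = _ := lintegral_add_right' _
                (((hf 0).aemeasurable.neg.max aemeasurable_const).ennreal_ofReal)
        rw [hStop] at hle
        have hlt : (∫⁻ ω, (⨆ n : ℕ, ((f n ω : ℝ) : EReal)).posPart ∂μ)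
            + (∫⁻ ω, ENNReal.ofReal (max (-(f 0 ω)) 0) ∂μ) < ⊤ :=
          ENNReal.add_lt_top.2 ⟨lt_top_iff_ne_top.2 hne, lt_top_iff_ne_top.2 hNfin⟩
        exact absurd (top_le_iff.1 hle) (ne_of_lt hlt)
      unfold eexp
      rw [if_pos hptop]
    rw [hL, hR]
  · -- finite case
    have hae : ∀ᵐ ω ∂μ, (⨆ n, ENNReal.ofReal (f n ω - f 0 ω)) < ⊤ := ae_lt_top' hΦmeas hStop
    have htoRealint : Integrable (fun ω => (⨆ n, ENNReal.ofReal (f n ω - f 0 ω)).toReal) μ :=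
      integrable_toReal_of_lintegral_ne_top hΦmeas hStop
    set finf : Ω → ℝ := fun ω => f 0 ω + (⨆ n, ENNReal.ofReal (f n ω - f 0 ω)).toReal with hfinf
    have hrepr : ∀ n ω, f n ω = f 0 ω + (ENNReal.ofReal (f n ω - f 0 ω)).toReal := by
      intro n ω
      rw [ENNReal.toReal_ofReal (sub_nonneg.2 (hmono ω (Nat.zero_le n)))]
      ring
    have hptwise : ∀ ω, (⨆ n, ENNReal.ofReal (f n ω - f 0 ω)) < ⊤ →
        (⨆ n : ℕ, ((f n ω : ℝ) : EReal)) = ((finf ω : ℝ) : EReal) := by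
      intro ω hω
      have hle : ∀ n, f n ω ≤ finf ω := by
        intro n
        rw [hrepr n ω, hfinf]
        have := ENNReal.toReal_mono hω.ne
          (le_iSup (fun n => ENNReal.ofReal (f n ω - f 0 ω)) n)
        simp only
        linarith
      apply le_antisymm
      · exact iSup_le fun n => EReal.coe_le_coe_iff.2 (hle n)
      · by_contra hcon
        push_neg at hcon
        have hFbot : ((f 0 ω : ℝ) : EReal) ≤ ⨆ n : ℕ, ((f n ω : ℝ) : EReal) :=
          le_iSup (fun n : ℕ => ((f n ω : ℝ) : EReal)) 0
        have hFtop : (⨆ n : ℕ, ((f n ω : ℝ) : EReal)) < ⊤ :=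
          hcon.trans_le le_top
        have hnebot : (⨆ n : ℕ, ((f n ω : ℝ) : EReal)) ≠ ⊥ := by
          intro hb; rw [hb] at hFbot; simp at hFbot
        obtain ⟨x, hx⟩ : ∃ x : ℝ, (⨆ n : ℕ, ((f n ω : ℝ) : EReal)) = (x : EReal) :=
          ⟨_, (EReal.coe_toReal hFtop.ne hnebot).symm⟩
        rw [hx] at hcon hFbot
        have hxlt : x < finf ω := EReal.coe_lt_coe_iff.1 hcon
        have hxf0 : f 0 ω ≤ x := EReal.coe_le_coe_iff.1 hFbot
        have h1 : ENNReal.ofReal (x - f 0 ω) < ⨆ n, ENNReal.ofReal (f n ω - f 0 ω) := by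
          rw [ENNReal.ofReal_lt_iff_lt_toReal (by linarith) hω.ne]
          rw [hfinf] at hxlt
          simp only at hxlt
          linarith
        obtain ⟨n, hn⟩ := lt_iSup_iff.1 h1
        have h2 : x - f 0 ω < f n ω - f 0 ω :=
          (ENNReal.ofReal_lt_ofReal_iff_of_nonneg (by linarith)).1 hn
        have hxn : x < f n ω := by linarith
        have h3 : ((f n ω : ℝ) : EReal) ≤ (x : EReal) := hx ▸
          le_iSup (fun n : ℕ => ((f n ω : ℝ) : EReal)) n
        exact absurd (EReal.coe_le_coe_iff.1 h3) (not_le.2 hxn)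
    have hfinfint : Integrable finf μ := (hf 0).add htoRealint
    have hFeq : (fun ω => ⨆ n : ℕ, ((f n ω : ℝ) : EReal)) =ᵐ[μ]
        fun ω => ((finf ω : ℝ) : EReal) := hae.mono fun ω hω => hptwise ω hω
    rw [stmt9_eexp_congr hFeq, stmt9_eexp_coe hfinfint]
    have hIle : ∀ n, I n ≤ ∫ ω, finf ω ∂μ := by
      intro n
      apply integral_mono_ae (hf n) hfinfint
      refine hae.mono fun ω hω => ?_
      rw [hrepr n ω, hfinf]
      have := ENNReal.toReal_mono hω.ne
        (le_iSup (fun n => ENNReal.ofReal (f n ω - f 0 ω)) n)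
      simp only
      linarith
    have hIntEq : (∫ ω, finf ω ∂μ) =
        I 0 + (∫⁻ ω, ⨆ n, ENNReal.ofReal (f n ω - f 0 ω) ∂μ).toReal := by
      rw [hfinf, integral_add (hf 0) htoRealint, integral_toReal hΦmeas hae]
    apply le_antisymm
    · exact iSup_le fun n => EReal.coe_le_coe_iff.2 (hIle n)
    · by_contra hcon
      push_neg at hcon
      have hTbot : ((I 0 : ℝ) : EReal) ≤ ⨆ n : ℕ, ((I n : ℝ) : EReal) :=
        le_iSup (fun n : ℕ => ((I n : ℝ) : EReal)) 0
      have hTtop : (⨆ n : ℕ, ((I n : ℝ) : EReal)) < ⊤ := hcon.trans_le le_top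
      have hnebot : (⨆ n : ℕ, ((I n : ℝ) : EReal)) ≠ ⊥ := by
        intro hb; rw [hb] at hTbot; simp at hTbot
      obtain ⟨x, hx⟩ : ∃ x : ℝ, (⨆ n : ℕ, ((I n : ℝ) : EReal)) = (x : EReal) :=
        ⟨_, (EReal.coe_toReal hTtop.ne hnebot).symm⟩
      rw [hx] at hcon hTbot
      have hxlt : x < ∫ ω, finf ω ∂μ := EReal.coe_lt_coe_iff.1 hcon
      have hxI0 : I 0 ≤ x := EReal.coe_le_coe_iff.1 hTbot
      have h1 : ENNReal.ofReal (x - I 0) < ∫⁻ ω, ⨆ n, ENNReal.ofReal (f n ω - f 0 ω) ∂μ := by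
        rw [ENNReal.ofReal_lt_iff_lt_toReal (by linarith) hStop]
        rw [hIntEq] at hxlt
        linarith
      rw [hS] at h1
      obtain ⟨n, hn⟩ := lt_iSup_iff.1 h1
      rw [hφint n] at hn
      have h2 : x - I 0 < I n - I 0 :=
        (ENNReal.ofReal_lt_ofReal_iff_of_nonneg (by linarith)).1 hn
      have hxn : x < I n := by linarith
      have h3 : ((I n : ℝ) : EReal) ≤ (x : EReal) := hx ▸
        le_iSup (fun n : ℕ => ((I n : ℝ) : EReal)) n
      exact absurd (EReal.coe_le_coe_iff.1 h3) (not_le.2 hxn)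

/-- For a finite convex `g` with `Eg` finite on a decomposable space `U`, the
recession function of `Eg` satisfies `(Eg)^∞(u) = E[g^∞(u)]`. -/
theorem recession_of_integral_functional
    {Ω : Type*} [MeasurableSpace Ω] (μ : Measure Ω) [IsProbabilityMeasure μ]
    (m : ℕ) (g : (Fin m → ℝ) → ℝ) (hgconv : ConvexOn ℝ Set.univ g)
    (U : Set (Ω → Fin m → ℝ))
    (hUmeas : ∀ u ∈ U, Measurable u)
    (hU0 : (fun _ => (0 : Fin m → ℝ)) ∈ U)
    (hUsmul : ∀ u ∈ U, ∀ c : ℝ, (fun ω => c • u ω) ∈ U)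
    (hUadd : ∀ u ∈ U, ∀ u' ∈ U, (fun ω => u ω + u' ω) ∈ U)
    (hUdec : ∀ (A : Set Ω), MeasurableSet A → ∀ u ∈ U, ∀ u' : Ω → Fin m → ℝ,
      Measurable u' → (∃ C : ℝ, ∀ ω i, |u' ω i| ≤ C) →
      (fun ω => if ω ∈ A then u ω else u' ω) ∈ U)
    (hfin : ∀ u ∈ U, Integrable (fun ω => g (u ω)) μ) :
    ∀ u ∈ U,
      (⨆ α : {a : ℝ // 0 < a},
          ((((∫ ω, g (α.1 • u ω) ∂μ) - g 0) / α.1 : ℝ) : EReal)) =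
        eexp μ (fun ω => gRec g (u ω)) := by
  intro u hu
  -- integrability of the scaled compositions
  have hints : ∀ a : ℝ, Integrable (fun ω => g (a • u ω)) μ := fun a =>
    hfin _ (hUsmul u hu a)
  have hinth : ∀ a : ℝ, Integrable (fun ω => (g (a • u ω) - g 0) / a) μ := fun a =>
    ((hints a).sub (integrable_const (g 0))).div_const a
  -- the integral functional identity
  have Jeq : ∀ a : ℝ,
      ((∫ ω, g (a • u ω) ∂μ) - g 0) / a = ∫ ω, (g (a • u ω) - g 0) / a ∂μ := by
    intro a
    rw [integral_div, integral_sub (hints a) (integrable_const (g 0)),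
      integral_const]
    simp
  -- f n
  set f : ℕ → Ω → ℝ := fun n ω => (g (((n : ℝ) + 1) • u ω) - g 0) / ((n : ℝ) + 1) with hf
  have hfint : ∀ n, Integrable (f n) μ := fun n => hinth ((n : ℝ) + 1)
  have hfmono : ∀ ω, Monotone fun n => f n ω := by
    intro ω n k hnk
    exact stmt9_slope_mono hgconv (u ω) (by positivity)
      (by exact_mod_cast add_le_add_left (Nat.cast_le.2 hnk) 1)
  -- LHS reduction
  have hLHS : (⨆ α : {a : ℝ // 0 < a},
      ((((∫ ω, g (α.1 • u ω) ∂μ) - g 0) / α.1 : ℝ) : EReal)) =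
      ⨆ n : ℕ, ((∫ ω, f n ω ∂μ : ℝ) : EReal) := by
    rw [stmt9_sup_nat (fun a => ((((∫ ω, g (a • u ω) ∂μ) - g 0) / a : ℝ) : EReal))
      (by
        intro a b ha hab
        rw [EReal.coe_le_coe_iff, Jeq a, Jeq b]
        exact integral_mono (hinth a) (hinth b)
          (fun ω => stmt9_slope_mono hgconv (u ω) ha hab))]
    congr 1
    funext n
    rw [Jeq]
  -- RHS reduction
  have hRHS : (fun ω => gRec g (u ω)) = fun ω => ⨆ n : ℕ, ((f n ω : ℝ) : EReal) := by
    funext ω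
    exact stmt9_sup_nat (fun a => (((g (a • u ω) - g 0) / a : ℝ) : EReal))
      (fun a b ha hab => EReal.coe_le_coe_iff.2 (stmt9_slope_mono hgconv (u ω) ha hab))
  rw [hLHS, hRHS]
  exact stmt9_eexp_mct μ f hfint hfmono

end Stmt9
end

section
/- Let φ : X → (−∞,+∞] be a proper convex function attaining its infimum over a constraint in the form φ(u) = inf_{x∈N} F(x,u) for a jointly convex F, and suppose φ(ū) = F(x̄, ū) for some x̄ ∈ N. Then φ^∞(u) = sup_{α>0} inf_{x∈N} (F(x̄+αx, ū+αu) − F(x̄,ū))/α ≤ inf_{x∈N} F^∞(x,u), where F^∞ is the recession function of F. -/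
/-- `x ↦ x - r` as an order iso on `EReal`, for real `r`. -/
noncomputable def ERealSubIso (r : ℝ) : EReal ≃o EReal where
  toFun x := x - (r : EReal)
  invFun x := x + (r : EReal)
  left_inv x := EReal.sub_add_cancel
  right_inv x := EReal.add_sub_cancel_right
  map_rel_iff' := by
    intro x y
    simp only [Equiv.coe_fn_mk]
    rw [EReal.sub_le_iff_le_add (Or.inl (EReal.coe_ne_bot r)) (Or.inl (EReal.coe_ne_top r)),
      EReal.sub_add_cancel]

/-- `x ↦ c * x` as an order iso on `EReal`, for real `c > 0`. -/
noncomputable def ERealMulIso (c : ℝ) (hc : 0 < c) : EReal ≃o EReal where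
  toFun x := (c : EReal) * x
  invFun x := ((c⁻¹ : ℝ) : EReal) * x
  left_inv x := by
    show ((c⁻¹ : ℝ) : EReal) * ((c : EReal) * x) = x
    rw [← mul_assoc, ← EReal.coe_mul, inv_mul_cancel₀ hc.ne', EReal.coe_one, one_mul]
  right_inv x := by
    show (c : EReal) * (((c⁻¹ : ℝ) : EReal) * x) = x
    rw [← mul_assoc, ← EReal.coe_mul, mul_inv_cancel₀ hc.ne', EReal.coe_one, one_mul]
  map_rel_iff' := by
    intro x y
    simp only [Equiv.coe_fn_mk]
    constructor
    · intro h
      have := mul_le_mul_of_nonneg_left h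
        (by exact_mod_cast (inv_nonneg.2 hc.le) : (0:EReal) ≤ ((c⁻¹ : ℝ) : EReal))
      rwa [← mul_assoc, ← mul_assoc, ← EReal.coe_mul, inv_mul_cancel₀ hc.ne', EReal.coe_one,
        one_mul, one_mul] at this
    · intro h
      exact mul_le_mul_of_nonneg_left h (by exact_mod_cast hc.le)

/-- `x ↦ c * (x - r)` commutes with infima over `EReal`. -/
lemma EReal.mul_sub_iInf {ι : Sort*} [Nonempty ι] (c r : ℝ) (hc : 0 < c) (f : ι → EReal) :
    (c : EReal) * ((⨅ i, f i) - (r : EReal)) = ⨅ i, (c : EReal) * (f i - (r : EReal)) :=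
  ((ERealSubIso r).trans (ERealMulIso c hc)).map_iInf f



noncomputable section Stmt10

/-- If `φ(u) = inf_{x∈N} F(x,u)` for a jointly convex proper `F`, `N` a
subspace, and the infimum at `ū` is attained at `x̄ ∈ N` with `F(x̄,ū)` finite, then
`φ^∞(u) = sup_{α>0} inf_{x∈N} (F(x̄+αx, ū+αu) − F(x̄,ū))/α ≤ inf_{x∈N} F^∞(x,u)`,
where `F^∞(x,u) = sup_{α>0} (F(x̄+αx, ū+αu) − F(x̄,ū))/α`. -/
theorem recession_of_value_function
    {X' X : Type*} [AddCommGroup X'] [Module ℝ X'] [AddCommGroup X] [Module ℝ X]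
    (N : Submodule ℝ X') (F : X' → X → EReal)
    (hproper : (∀ x u, F x u ≠ ⊥) ∧ ∃ x u, F x u ≠ ⊤)
    (hconv : ∀ (x x' : X') (u u' : X) (lam : ℝ), 0 ≤ lam → lam ≤ 1 →
      F (lam • x + (1 - lam) • x') (lam • u + (1 - lam) • u') ≤
        (lam : EReal) * F x u + ((1 - lam : ℝ) : EReal) * F x' u')
    (φ : X → EReal) (hφ : ∀ u, φ u = ⨅ x : N, F x u)
    (xb : X') (hxb : xb ∈ N) (ub : X) (r : ℝ)
    (hattain : φ ub = F xb ub) (hfin : F xb ub = (r : EReal)) (u : X) :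
    (⨆ α : {a : ℝ // 0 < a},
        (((α.1)⁻¹ : ℝ) : EReal) * (φ (ub + α.1 • u) - φ ub)) =
      (⨆ α : {a : ℝ // 0 < a}, ⨅ x : N,
        (((α.1)⁻¹ : ℝ) : EReal) * (F (xb + α.1 • x.1) (ub + α.1 • u) - F xb ub)) ∧
    (⨆ α : {a : ℝ // 0 < a},
        (((α.1)⁻¹ : ℝ) : EReal) * (φ (ub + α.1 • u) - φ ub)) ≤
      ⨅ x : N, ⨆ α : {a : ℝ // 0 < a},
        (((α.1)⁻¹ : ℝ) : EReal) * (F (xb + α.1 • x.1) (ub + α.1 • u) - F xb ub) := by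
  have key : ∀ α : {a : ℝ // 0 < a},
      (((α.1)⁻¹ : ℝ) : EReal) * (φ (ub + α.1 • u) - φ ub) =
      ⨅ x : N, (((α.1)⁻¹ : ℝ) : EReal) * (F (xb + α.1 • x.1) (ub + α.1 • u) - F xb ub) := by
    rintro ⟨a, ha⟩
    -- reindexing equivalence of N
    let e : N ≃ N :=
      { toFun := fun x => ⟨xb + a • x.1, N.add_mem hxb (N.smul_mem a x.2)⟩
        invFun := fun y => ⟨a⁻¹ • (y.1 - xb), N.smul_mem _ (N.sub_mem y.2 hxb)⟩
        left_inv := fun x => by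
          ext; simp [add_sub_cancel_left, smul_smul, inv_mul_cancel₀ ha.ne']
        right_inv := fun y => by
          ext; simp [smul_smul, mul_inv_cancel₀ ha.ne'] }
    have hreindex : (⨅ y : N, F y.1 (ub + a • u)) = ⨅ x : N, F (xb + a • x.1) (ub + a • u) :=
      (e.iInf_comp (g := fun y : N => F y.1 (ub + a • u))).symm
    rw [hattain, hfin, hφ, hreindex,
      EReal.mul_sub_iInf a⁻¹ r (inv_pos.2 ha) (fun x : N => F (xb + a • x.1) (ub + a • u))]
  constructor
  · exact iSup_congr key
  · calc (⨆ α : {a : ℝ // 0 < a},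
        (((α.1)⁻¹ : ℝ) : EReal) * (φ (ub + α.1 • u) - φ ub))
        = ⨆ α : {a : ℝ // 0 < a}, ⨅ x : N,
          (((α.1)⁻¹ : ℝ) : EReal) * (F (xb + α.1 • x.1) (ub + α.1 • u) - F xb ub) :=
        iSup_congr key
      _ ≤ _ := iSup_iInf_le_iInf_iSup _


end Stmt10
end
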